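/- Let X be a real inner product space, Y a real normed space, U ⊆ X \ {0} a symmetric set (u ∈ U if and only if −u ∈ U), and let u₀ ∈ U be a point minimizing the norm over U, i.e. ‖u₀‖ ≤ ‖v‖ for all v ∈ U. If H : U → Y is L-Lipschitz, then for every u′ ∈ U, ‖H(u′)‖/‖u′‖ ≤ max( ‖H(u₀)‖/‖u₀‖, ‖H(−u₀)‖/‖u₀‖ ) + √2·L. -/

import Mathlib

/-- For a symmetric set `U` of nonzero vectors in an inner product space, sampling at a
minimal-norm point `u₀` and at `-u₀` bounds the `L₂`-gain of any `L`-Lipschitz operator up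
to an additive error `√2·L`. -/
theorem gain_bound_from_two_samples {X Y : Type*}
    [NormedAddCommGroup X] [InnerProductSpace ℝ X] [NormedAddCommGroup Y] [NormedSpace ℝ Y]
    (U : Set X) (hU : ∀ u ∈ U, u ≠ 0) (hsymm : ∀ u ∈ U, -u ∈ U)
    (u₀ : X) (hu₀ : u₀ ∈ U) (hmin : ∀ v ∈ U, ‖u₀‖ ≤ ‖v‖)
    (L : ℝ) (hL : 0 < L) (H : X → Y)
    (hHlip : ∀ v ∈ U, ∀ w ∈ U, ‖H v - H w‖ ≤ L * ‖v - w‖) :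
    ∀ u' ∈ U, ‖H u'‖ / ‖u'‖ ≤ max (‖H u₀‖ / ‖u₀‖) (‖H (-u₀)‖ / ‖u₀‖) + Real.sqrt 2 * L := by
  intro u' hu'
  have hnu' : (0:ℝ) < ‖u'‖ := norm_pos_iff.mpr (hU u' hu')
  have hnu0 : (0:ℝ) < ‖u₀‖ := norm_pos_iff.mpr (hU u₀ hu₀)
  have hmu₀ : -u₀ ∈ U := hsymm u₀ hu₀
  -- choose w ∈ {u₀, -u₀} with ⟪u', w⟫ ≥ 0
  obtain ⟨w, hwU, hwn, hip, hmaxw⟩ :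
      ∃ w, w ∈ U ∧ ‖w‖ = ‖u₀‖ ∧ 0 ≤ (inner ℝ u' w : ℝ) ∧
        ‖H w‖ / ‖u₀‖ ≤ max (‖H u₀‖ / ‖u₀‖) (‖H (-u₀)‖ / ‖u₀‖) := by
    rcases le_or_gt 0 (inner ℝ u' u₀ : ℝ) with h | h
    · exact ⟨u₀, hu₀, rfl, h, le_max_left _ _⟩
    · refine ⟨-u₀, hmu₀, norm_neg _, ?_, le_max_right _ _⟩
      rw [inner_neg_right]
      linarith
  have hdist : ‖u' - w‖ ≤ Real.sqrt 2 * ‖u'‖ := by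
    have hsq : ‖u' - w‖ ^ 2 ≤ 2 * ‖u'‖ ^ 2 := by
      have h1 : ‖u' - w‖ ^ 2 = ‖u'‖ ^ 2 - 2 * (inner ℝ u' w : ℝ) + ‖w‖ ^ 2 := by
        rw [norm_sub_sq_real]
      have h2 : ‖w‖ ≤ ‖u'‖ := hwn ▸ hmin u' hu'
      nlinarith [norm_nonneg w, norm_nonneg u']
    have := Real.sqrt_le_sqrt hsq
    rwa [Real.sqrt_sq (norm_nonneg _), Real.sqrt_mul (by norm_num : (0:ℝ) ≤ 2),
      Real.sqrt_sq (norm_nonneg _)] at this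
  have hlip := hHlip u' hu' w hwU
  have hHw : ‖H w‖ ≤ max (‖H u₀‖ / ‖u₀‖) (‖H (-u₀)‖ / ‖u₀‖) * ‖u'‖ := by
    have h1 : ‖H w‖ ≤ max (‖H u₀‖ / ‖u₀‖) (‖H (-u₀)‖ / ‖u₀‖) * ‖u₀‖ := by
      rw [← div_le_iff₀ hnu0] at *; exact hmaxw
    have hmaxnn : 0 ≤ max (‖H u₀‖ / ‖u₀‖) (‖H (-u₀)‖ / ‖u₀‖) :=
      le_trans (div_nonneg (norm_nonneg _) (norm_nonneg _)) (le_max_left _ _)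
    calc ‖H w‖ ≤ _ * ‖u₀‖ := h1
      _ ≤ _ * ‖u'‖ := by exact mul_le_mul_of_nonneg_left (hmin u' hu') hmaxnn
  rw [div_le_iff₀ hnu']
  have h3 : ‖H u'‖ ≤ ‖H w‖ + L * ‖u' - w‖ := by
    calc ‖H u'‖ ≤ ‖H w‖ + ‖H u' - H w‖ := by
          have := norm_sub_norm_le (H u') (H w); linarith [abs_le.mp (abs_norm_sub_norm_le (H u') (H w))]
      _ ≤ ‖H w‖ + L * ‖u' - w‖ := by linarith
  have h4 : L * ‖u' - w‖ ≤ Real.sqrt 2 * L * ‖u'‖ := by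
    calc L * ‖u' - w‖ ≤ L * (Real.sqrt 2 * ‖u'‖) := mul_le_mul_of_nonneg_left hdist hL.le
      _ = Real.sqrt 2 * L * ‖u'‖ := by ring
  calc ‖H u'‖ ≤ ‖H w‖ + L * ‖u' - w‖ := h3
    _ ≤ max (‖H u₀‖ / ‖u₀‖) (‖H (-u₀)‖ / ‖u₀‖) * ‖u'‖ + Real.sqrt 2 * L * ‖u'‖ := by linarith
    _ = (max (‖H u₀‖ / ‖u₀‖) (‖H (-u₀)‖ / ‖u₀‖) + Real.sqrt 2 * L) * ‖u'‖ := by ring
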